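/- Let T ⊂ ℝⁿ be a simplex with barycenter x̄ and B(x̄,r₁) ⊂ T ⊂ B(x̄,r₂). For any Lipschitz map u : T → ℝⁿ, any matrix B ∈ ℝ^{n×n}, and A the gradient of the affine interpolation of u at the vertices of T, one has |B - A| ≤ (2 r₂/r₁) · Lip(u - L_B), where L_B(x) = Bx and |·| denotes the operator norm. -/

import Mathlib

open Metric

private lemma exists_weights {E : Type*} [AddCommGroup E] [Module ℝ E] {m : ℕ}
    (v : Fin m → E) {p : E} (hp : p ∈ convexHull ℝ (Set.range v)) :
    ∃ w : Fin m → ℝ, (∀ i, 0 ≤ w i) ∧ ∑ i, w i = 1 ∧ ∑ i, w i • v i = p := by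
  rw [convexHull_range_eq_exists_affineCombination] at hp
  obtain ⟨s, w, h0, h1, h2⟩ := hp
  refine ⟨fun i => if i ∈ s then w i else 0, fun i => ?_, ?_, ?_⟩
  · dsimp only; split_ifs with h
    exacts [h0 _ h, le_rfl]
  · rw [Finset.sum_ite_mem, Finset.univ_inter, h1]
  · rw [← h2, Finset.affineCombination_eq_linear_combination s v w h1]
    simp [ite_smul, Finset.sum_ite_mem, Finset.univ_inter]

private lemma convex_bound {E : Type*} [NormedAddCommGroup E] [NormedSpace ℝ E] {m : ℕ}
    (w : Fin m → ℝ) (hw0 : ∀ i, 0 ≤ w i) (hw1 : ∑ i, w i = 1)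
    (z : Fin m → E) (c : E) (M : ℝ) (h : ∀ i, ‖z i - c‖ ≤ M) :
    ‖(∑ i, w i • z i) - c‖ ≤ M := by
  have he : (∑ i, w i • z i) - c = ∑ i, w i • (z i - c) := by
    simp [smul_sub, Finset.sum_sub_distrib, ← Finset.sum_smul, hw1]
  rw [he]
  calc ‖∑ i, w i • (z i - c)‖ ≤ ∑ i, ‖w i • (z i - c)‖ := norm_sum_le _ _
    _ ≤ ∑ i, w i * M := by
        refine Finset.sum_le_sum fun i _ => ?_
        rw [norm_smul, Real.norm_eq_abs, abs_of_nonneg (hw0 i)]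
        exact mul_le_mul_of_nonneg_left (h i) (hw0 i)
    _ = M := by rw [← Finset.sum_mul, hw1, one_mul]

theorem stmt3 (n : ℕ) (x : Fin (n+1) → EuclideanSpace ℝ (Fin n))
    (hx : AffineIndependent ℝ x)
    (T : Set (EuclideanSpace ℝ (Fin n))) (hT : T = convexHull ℝ (Set.range x))
    (xbar : EuclideanSpace ℝ (Fin n)) (hxbar : xbar = ((n : ℝ) + 1)⁻¹ • ∑ i, x i)
    (r₁ r₂ : ℝ) (hr₁ : 0 < r₁) (hr₂ : 0 < r₂)
    (hball₁ : ball xbar r₁ ⊆ T) (hball₂ : T ⊆ ball xbar r₂)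
    (u : EuclideanSpace ℝ (Fin n) → EuclideanSpace ℝ (Fin n))
    (A B : EuclideanSpace ℝ (Fin n) →L[ℝ] EuclideanSpace ℝ (Fin n))
    (b : EuclideanSpace ℝ (Fin n))
    (hinterp : ∀ i, A (x i) + b = u (x i))
    (L : ℝ) (hL0 : 0 ≤ L)
    (hL : ∀ p ∈ T, ∀ q ∈ T, ‖(u p - B p) - (u q - B q)‖ ≤ L * ‖p - q‖) :
    ‖A - B‖ ≤ (2 * r₂ / r₁) * L := by
  set C : EuclideanSpace ℝ (Fin n) →L[ℝ] EuclideanSpace ℝ (Fin n) := A - B with hCdef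
  -- vertices are in T
  have hxT : ∀ i, x i ∈ T := fun i => by
    rw [hT]; exact subset_convexHull ℝ _ ⟨i, rfl⟩
  -- diameter bound on T
  have hdiam : ∀ p ∈ T, ∀ q ∈ T, ‖p - q‖ ≤ 2 * r₂ := by
    intro p hp q hq
    have h1 : dist p xbar < r₂ := hball₂ hp
    have h2 : dist q xbar < r₂ := hball₂ hq
    have := dist_triangle p xbar q
    rw [dist_comm xbar q] at this
    have : dist p q ≤ 2 * r₂ := by linarith
    simpa [dist_eq_norm] using this
  -- bound at pairs of vertices
  have key1 : ∀ i j, ‖C (x i) - C (x j)‖ ≤ 2 * r₂ * L := by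
    intro i j
    have hA : ∀ i, A (x i) = u (x i) - b := fun i => by
      have := hinterp i; rw [← this]; abel
    have hCe : C (x i) - C (x j) = (u (x i) - B (x i)) - (u (x j) - B (x j)) := by
      simp only [hCdef, ContinuousLinearMap.sub_apply, hA]
      abel
    rw [hCe]
    calc ‖(u (x i) - B (x i)) - (u (x j) - B (x j))‖ ≤ L * ‖x i - x j‖ :=
          hL _ (hxT i) _ (hxT j)
      _ ≤ L * (2 * r₂) := mul_le_mul_of_nonneg_left (hdiam _ (hxT i) _ (hxT j)) hL0
      _ = 2 * r₂ * L := by ring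
  -- oscillation bound on T
  have key2 : ∀ p ∈ T, ∀ q ∈ T, ‖C p - C q‖ ≤ 2 * r₂ * L := by
    intro p hp q hq
    rw [hT] at hp hq
    obtain ⟨w, hw0, hw1, hwp⟩ := exists_weights x hp
    obtain ⟨v, hv0, hv1, hvq⟩ := exists_weights x hq
    have hCp : C p = ∑ i, w i • C (x i) := by
      rw [← hwp]; simp [map_sum, map_smul]
    have hCq : C q = ∑ j, v j • C (x j) := by
      rw [← hvq]; simp [map_sum, map_smul]
    rw [hCp]
    refine convex_bound w hw0 hw1 _ _ _ fun i => ?_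
    rw [hCq, ← norm_neg, neg_sub]
    exact convex_bound v hv0 hv1 _ _ _ fun j => key1 j i
  -- bound on the closed ball of radius r₁ around 0
  have bound2 : ∀ z : EuclideanSpace ℝ (Fin n), ‖z‖ ≤ r₁ → ‖C z‖ ≤ 2 * r₂ * L := by
    have hopen : ∀ z ∈ ball (0 : EuclideanSpace ℝ (Fin n)) r₁, ‖C z‖ ≤ 2 * r₂ * L := by
      intro z hz
      have h1 : xbar + z ∈ T := by
        apply hball₁
        rw [mem_ball] at hz ⊢
        simpa [dist_eq_norm] using hz
      have h2 : xbar ∈ T := hball₁ (mem_ball_self hr₁)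
      have : C z = C (xbar + z) - C xbar := by rw [map_add]; abel
      rw [this]
      exact key2 _ h1 _ h2
    intro z hz
    have hcl : closedBall (0 : EuclideanSpace ℝ (Fin n)) r₁ ⊆
        {z | ‖C z‖ ≤ 2 * r₂ * L} := by
      rw [← closure_ball 0 hr₁.ne']
      exact closure_minimal hopen (isClosed_le (continuous_norm.comp C.continuous) continuous_const)
    exact hcl (by simpa [mem_closedBall, dist_eq_norm] using hz)
  -- conclude
  refine ContinuousLinearMap.opNorm_le_bound C (by positivity) fun y => ?_
  rcases eq_or_ne y 0 with rfl | hy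
  · simp
  · have hyn : 0 < ‖y‖ := norm_pos_iff.mpr hy
    set z := (r₁ / ‖y‖) • y with hzdef
    have hzn : ‖z‖ = r₁ := by
      rw [hzdef, norm_smul, Real.norm_eq_abs, abs_of_pos (by positivity),
        div_mul_cancel₀ _ hyn.ne']
    have hb := bound2 z hzn.le
    have hCz : ‖C z‖ = (r₁ / ‖y‖) * ‖C y‖ := by
      rw [hzdef, map_smul, norm_smul, Real.norm_eq_abs, abs_of_pos (by positivity)]
    rw [hCz] at hb
    rw [div_mul_eq_mul_div, div_le_iff₀ hyn, mul_comm] at hb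
    calc ‖C y‖ = (‖C y‖ * r₁) / r₁ := by field_simp
      _ ≤ (2 * r₂ * L * ‖y‖) / r₁ := div_le_div_of_nonneg_right hb hr₁.le
      _ = 2 * r₂ / r₁ * L * ‖y‖ := by ring
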